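/- For every n ≥ 1 there exists a polynomial map f : ℝ^n → ℝ^n such that f([−1,1]^n) = B̄_n and, moreover, there exists ε₀ > 0 such that f(B_n(0, 1+ε)) = B̄_n for every 0 < ε < ε₀, where B_n(0,r) denotes the open Euclidean ball of radius r centered at the origin of ℝ^n. -/

import Mathlib

open Polynomial

noncomputable section
namespace PolyBall

/-- the basic cubic `s(t) = (3t - t³)/2` -/
def sfun (t : ℝ) : ℝ := t * (3 - t ^ 2) / 2

lemma sfun_bound {t : ℝ} (h : |t| ≤ 2) : |sfun t| ≤ 1 := by
  rw [abs_le] at h ⊢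
  unfold sfun
  constructor
  · nlinarith [mul_nonneg (sq_nonneg (t + 1)) (by linarith : (0:ℝ) ≤ 2 - t)]
  · nlinarith [mul_nonneg (sq_nonneg (t - 1)) (by linarith : (0:ℝ) ≤ t + 2)]

/-- the rescaled cubic `s_c(t) = c·s(t/c)` -/
def sc (c t : ℝ) : ℝ := t * (3 - t ^ 2 / c ^ 2) / 2

lemma sc_eq {c : ℝ} (hc : c ≠ 0) (t : ℝ) : sc c t = c * sfun (t / c) := by
  unfold sc sfun; field_simp

lemma sc_bound {c t : ℝ} (hc : 0 < c) (h : |t| ≤ 2 * c) : |sc c t| ≤ c := by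
  rw [sc_eq hc.ne' t, abs_mul, abs_of_pos hc]
  calc c * |sfun (t / c)| ≤ c * 1 := by
        refine mul_le_mul_of_nonneg_left (sfun_bound ?_) hc.le
        rw [abs_div, abs_of_pos hc, div_le_iff₀ hc]
        linarith
    _ = c := mul_one c

/-- odd polynomial functions of the shape `t ↦ t·P(t²)` -/
def OddPoly (r : ℝ → ℝ) : Prop := ∃ P : ℝ[X], ∀ t, r t = t * P.eval (t ^ 2)

lemma OddPoly.id : OddPoly (fun t => t) := ⟨1, fun t => by simp⟩

lemma OddPoly.sfun : OddPoly sfun :=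
  ⟨C (3/2) - C (1/2) * X, fun t => by simp [PolyBall.sfun]; ring⟩

lemma OddPoly.sc {c : ℝ} (hc : c ≠ 0) : OddPoly (sc c) := by
  refine ⟨C (3/2) - C (1/(2*c^2)) * X, fun t => ?_⟩
  simp only [PolyBall.sc, eval_sub, eval_mul, eval_C, eval_X]
  field_simp

lemma OddPoly.comp {r₁ r₂ : ℝ → ℝ} (h₁ : OddPoly r₁) (h₂ : OddPoly r₂) :
    OddPoly (fun t => r₂ (r₁ t)) := by
  obtain ⟨P₁, h₁⟩ := h₁; obtain ⟨P₂, h₂⟩ := h₂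
  refine ⟨P₁ * P₂.comp (X * P₁ ^ 2), fun t => ?_⟩
  simp only [eval_mul, eval_comp, eval_pow, eval_X, h₁, h₂]
  ring

/-- the squashing chain: `chain k` maps `[-2^k, 2^k]` into `[-1,1]`. -/
def chain : ℕ → ℝ → ℝ
  | 0 => fun t => t
  | (k+1) => fun t => chain k (sc (2 ^ k) t)

lemma chain_oddPoly (k : ℕ) : OddPoly (chain k) := by
  induction k with
  | zero => exact OddPoly.id
  | succ k ih =>
      show OddPoly (fun t => chain k (sc (2 ^ k) t))
      exact OddPoly.comp (OddPoly.sc (by positivity : ((2:ℝ) ^ k) ≠ 0)) ih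

lemma chain_bound (k : ℕ) {t : ℝ} (h : |t| ≤ 2 ^ k) : |chain k t| ≤ 1 := by
  induction k generalizing t with
  | zero => simpa [chain] using h
  | succ k ih =>
      refine ih (sc_bound (by positivity) ?_)
      rw [pow_succ] at h; linarith [h]

lemma sqrt_three_irrational : Irrational (Real.sqrt 3) :=
  (Nat.prime_three).irrational_sqrt

lemma chain_rat (k : ℕ) (q : ℚ) (hq : q ≠ 0) :
    ∃ q' : ℚ, chain k (q : ℝ) = (q' : ℝ) ∧ q' ≠ 0 := by
  induction k generalizing q with
  | zero => exact ⟨q, rfl, hq⟩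
  | succ k ih =>
      have h2k : ((2:ℚ) ^ k) ≠ 0 := by positivity
      have hne : q * (3 - q ^ 2 / (2 ^ k : ℚ) ^ 2) / 2 ≠ 0 := by
        intro h0
        have ha : q * (3 - q ^ 2 / (2 ^ k : ℚ) ^ 2) = 0 := by
          have := div_eq_zero_iff.mp h0
          rcases this with h | h
          · exact h
          · norm_num at h
        have hfac : 3 - q ^ 2 / (2 ^ k : ℚ) ^ 2 = 0 := by
          rcases mul_eq_zero.mp ha with h | h
          · exact absurd h hq
          · exact h
        have h3 : (q / 2 ^ k : ℚ) ^ 2 = 3 := by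
          rw [div_pow]
          field_simp at hfac ⊢
          linarith
        have h3' : ((q / 2 ^ k : ℚ) : ℝ) ^ 2 = 3 := by exact_mod_cast congrArg (Rat.cast (K := ℝ)) h3
        have hs : Real.sqrt 3 = ((|q / 2 ^ k| : ℚ) : ℝ) := by
          rw [← h3', Real.sqrt_sq_eq_abs]; push_cast; ring
        exact sqrt_three_irrational ⟨|q / 2 ^ k|, hs.symm⟩
      have hcast : sc ((2:ℝ) ^ k) (q : ℝ) = ((q * (3 - q ^ 2 / (2 ^ k : ℚ) ^ 2) / 2 : ℚ) : ℝ) := by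
        unfold sc; push_cast; ring
      obtain ⟨q', hq', hq'ne⟩ := ih _ hne
      exact ⟨q', by rw [show chain (k+1) (q:ℝ) = chain k (sc ((2:ℝ)^k) (q:ℝ)) from rfl, hcast, hq'], hq'ne⟩


lemma sfun_grow {v : ℝ} (h : |v| ≤ 1/2) : 11/8 * |v| ≤ |sfun v| := by
  have h2 : (0:ℝ) < 3 - v ^ 2 := by nlinarith [sq_abs v, abs_nonneg v]
  have : |sfun v| = |v| * (3 - v ^ 2) / 2 := by
    unfold sfun
    rw [abs_div, abs_mul, abs_of_pos h2]
    norm_num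
  rw [this]
  nlinarith [sq_abs v, abs_nonneg v]

lemma sfun_iter_bound (m : ℕ) {v : ℝ} (h : |v| ≤ 1) : |sfun^[m] v| ≤ 1 := by
  induction m with
  | zero => simpa using h
  | succ m ih => rw [Function.iterate_succ_apply']; exact sfun_bound (by linarith)

lemma boost {α : ℝ} (h0 : α ≠ 0) (h1 : |α| ≤ 1) :
    ∃ m, 1/2 ≤ |sfun^[m] α| ∧ |sfun^[m] α| ≤ 1 := by
  by_contra h
  push_neg at h
  have hsmall : ∀ m, |sfun^[m] α| < 1/2 := by
    intro m
    by_contra hh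
    push_neg at hh
    exact absurd (sfun_iter_bound m h1) (not_le.2 (h m hh))
  have grow : ∀ m, (11/8 : ℝ) ^ m * |α| ≤ |sfun^[m] α| := by
    intro m
    induction m with
    | zero => simp
    | succ m ih =>
        rw [Function.iterate_succ_apply']
        calc (11/8 : ℝ) ^ (m+1) * |α| = 11/8 * ((11/8:ℝ)^m * |α|) := by ring
          _ ≤ 11/8 * |sfun^[m] α| := by nlinarith
          _ ≤ |sfun (sfun^[m] α)| := sfun_grow (hsmall m).le
  have hαpos : 0 < |α| := abs_pos.mpr h0
  obtain ⟨m, hm⟩ := pow_unbounded_of_one_lt ((1/2) / |α|) (by norm_num : (1:ℝ) < 11/8)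
  have : (1/2 : ℝ) < (11/8:ℝ)^m * |α| := by
    rw [div_lt_iff₀ hαpos] at hm
    linarith
  linarith [grow m, hsmall m]

lemma exists_r (k : ℕ) : ∃ r : ℝ → ℝ, OddPoly r ∧ r 1 = 1 ∧ ∀ t : ℝ, |t| ≤ 2 ^ k → |r t| ≤ 1 := by
  obtain ⟨qα, hqα, hqαne⟩ := chain_rat k 1 one_ne_zero
  have hα0 : chain k (1:ℝ) ≠ 0 := by
    rw [show ((1:ℚ):ℝ) = (1:ℝ) from by norm_num] at hqα
    rw [hqα]
    exact_mod_cast hqαne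
  have hα1 : |chain k (1:ℝ)| ≤ 1 := chain_bound k (by rw [abs_one]; exact one_le_pow₀ (by norm_num : (1:ℝ) ≤ 2))
  obtain ⟨m, hm1, hm2⟩ := boost hα0 hα1
  set β := sfun^[m] (chain k 1) with hβ
  have hβ0 : β ≠ 0 := by
    intro h
    rw [h] at hm1
    norm_num at hm1
  refine ⟨fun t => sfun (sfun^[m] (chain k t) / β), ?_, ?_, ?_⟩
  · have hfin : OddPoly (fun t => sfun (t / β)) := by
      refine ⟨C (3/(2*β)) - C (1/(2*β^3)) * X, fun t => ?_⟩
      simp only [sfun, eval_sub, eval_mul, eval_C, eval_X]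
      field_simp
    have hiter : OddPoly (fun t => sfun^[m] t) := by
      clear hm1 hm2 hβ hβ0 hfin
      induction m with
      | zero => simpa using OddPoly.id
      | succ m ih =>
          have : (fun t => sfun^[m+1] t) = fun t => sfun ((fun u => sfun^[m] u) t) := by
            funext t
            rw [Function.iterate_succ_apply']
          rw [this]
          exact OddPoly.comp ih OddPoly.sfun
    have h := OddPoly.comp (OddPoly.comp (chain_oddPoly k) hiter) hfin
    exact h
  · show sfun (β / β) = 1
    rw [div_self hβ0]
    norm_num [sfun]
  · intro t ht
    have h1 : |chain k t| ≤ 1 := chain_bound k ht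
    have h2 : |sfun^[m] (chain k t)| ≤ 1 := sfun_iter_bound m h1
    apply sfun_bound
    rw [abs_div]
    rw [div_le_iff₀ (abs_pos.mpr hβ0)]
    nlinarith

end PolyBall

end


/-- A map between Euclidean spaces is a *polynomial map* if each of its components
is given by the evaluation of a real multivariate polynomial. -/
def IsPolynomialMap {σ τ : Type} (f : EuclideanSpace ℝ σ → EuclideanSpace ℝ τ) : Prop :=
  ∃ p : τ → MvPolynomial σ ℝ, ∀ x i, f x i = MvPolynomial.eval (fun j => x j) (p i)

/-- There is a polynomial map `f : ℝⁿ → ℝⁿ` with `f([−1,1]ⁿ) = B̄ₙ` and such that,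
for some `ε₀ > 0`, `f(Bₙ(0, 1+ε)) = B̄ₙ` for every `0 < ε < ε₀`. -/
theorem exists_poly_cube_onto_ball (n : ℕ) (hn : 1 ≤ n) :
    ∃ f : EuclideanSpace ℝ (Fin n) → EuclideanSpace ℝ (Fin n),
      IsPolynomialMap f ∧
      f '' {x : EuclideanSpace ℝ (Fin n) | ∀ i, x i ∈ Set.Icc (-1 : ℝ) 1} =
        Metric.closedBall 0 1 ∧
      ∃ ε₀ > (0 : ℝ), ∀ ε : ℝ, 0 < ε → ε < ε₀ →
        f '' Metric.ball 0 (1 + ε) = Metric.closedBall 0 1 := by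
  classical
  obtain ⟨r, ⟨P, hP⟩, hr1, hrb⟩ := PolyBall.exists_r n
  set f : EuclideanSpace ℝ (Fin n) → EuclideanSpace ℝ (Fin n) :=
    fun x => (Polynomial.eval (∑ j, x j ^ 2) P) • x with hf
  have hS : ∀ x : EuclideanSpace ℝ (Fin n), ∑ j, x j ^ 2 = ‖x‖ ^ 2 := by
    intro x
    rw [EuclideanSpace.norm_eq, Real.sq_sqrt (by positivity)]
    simp [Real.norm_eq_abs, sq_abs]
  have habs : ∀ (x : EuclideanSpace ℝ (Fin n)) (i : Fin n), |x i| ≤ ‖x‖ := by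
    intro x i
    rw [EuclideanSpace.norm_eq]
    have h1 : |x i| = Real.sqrt (x i ^ 2) := by rw [Real.sqrt_sq_eq_abs]
    rw [h1]
    apply Real.sqrt_le_sqrt
    have := Finset.single_le_sum (f := fun j => ‖x j‖ ^ 2)
      (fun j _ => by positivity) (Finset.mem_univ i)
    simpa [Real.norm_eq_abs, sq_abs] using this
  have hnormf : ∀ x : EuclideanSpace ℝ (Fin n), ‖f x‖ = |r ‖x‖| := by
    intro x
    rw [hf]
    simp only [norm_smul, Real.norm_eq_abs, hS, hP]
    rw [abs_mul, abs_of_nonneg (norm_nonneg x)]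
    ring
  have A2 : (2:ℝ) ≤ 2 ^ n := by
    calc (2:ℝ) = 2 ^ 1 := (pow_one 2).symm
      _ ≤ 2 ^ n := pow_le_pow_right₀ one_le_two hn
  have hsub : ∀ x : EuclideanSpace ℝ (Fin n), ‖x‖ ≤ 2 ^ n → ‖f x‖ ≤ 1 := by
    intro x hx
    rw [hnormf x]
    exact hrb ‖x‖ (by rwa [abs_of_nonneg (norm_nonneg x)])
  have hcover : ∀ y : EuclideanSpace ℝ (Fin n), ‖y‖ ≤ 1 →
      ∃ x : EuclideanSpace ℝ (Fin n), ‖x‖ ≤ 1 ∧ (∀ i, |x i| ≤ 1) ∧ f x = y := by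
    intro y hy
    rcases eq_or_ne y 0 with rfl | hy0
    · exact ⟨0, by simp, fun i => by simp, by simp [hf]⟩
    · have hypos : 0 < ‖y‖ := norm_pos_iff.mpr hy0
      have hcont : Continuous r := by
        have : r = fun t => t * Polynomial.eval (t ^ 2) P := funext hP
        rw [this]
        exact continuous_id.mul (P.continuous.comp (continuous_pow 2))
      have hr0 : r 0 = 0 := by rw [hP]; ring
      have hmem : ‖y‖ ∈ Set.Icc (r 0) (r 1) := by
        rw [hr0, hr1]; exact ⟨hypos.le, hy⟩
      obtain ⟨t, ht, hrt⟩ := intermediate_value_Icc zero_le_one hcont.continuousOn hmem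
      refine ⟨(t / ‖y‖) • y, ?_, ?_, ?_⟩
      · rw [norm_smul, Real.norm_eq_abs, abs_of_nonneg (div_nonneg ht.1 (norm_nonneg y)),
          div_mul_cancel₀ _ hypos.ne']
        exact ht.2
      · intro i
        have : ((t / ‖y‖) • y) i = (t / ‖y‖) * y i := rfl
        rw [this, abs_mul, abs_of_nonneg (div_nonneg ht.1 (norm_nonneg y))]
        calc t / ‖y‖ * |y i| ≤ t / ‖y‖ * ‖y‖ :=
              mul_le_mul_of_nonneg_left (habs y i) (div_nonneg ht.1 (norm_nonneg y))
          _ = t := div_mul_cancel₀ _ hypos.ne'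
          _ ≤ 1 := ht.2
      · have hxn : ‖(t / ‖y‖) • y‖ = t := by
          rw [norm_smul, Real.norm_eq_abs, abs_of_nonneg (div_nonneg ht.1 (norm_nonneg y)),
            div_mul_cancel₀ _ hypos.ne']
        rw [hf]
        simp only [hS, hxn]
        rw [smul_smul]
        have : Polynomial.eval (t ^ 2) P * (t / ‖y‖) = r t / ‖y‖ := by
          rw [hP]; ring
        rw [this, hrt, div_self hypos.ne', one_smul]
  refine ⟨f, ?_, ?_, ?_⟩
  · refine ⟨fun i => Polynomial.aeval (∑ j, MvPolynomial.X j ^ 2) P * MvPolynomial.X i,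
      fun x i => ?_⟩
    have hbridge : ∀ (Q : MvPolynomial (Fin n) ℝ),
        MvPolynomial.eval (fun j => x j) (Polynomial.aeval Q P)
          = Polynomial.eval (MvPolynomial.eval (fun j => x j) Q) P := by
      intro Q
      rw [Polynomial.aeval_def, Polynomial.hom_eval₂]
      rw [Polynomial.eval]
      congr 1
      ext r
      simp
    have hfxi : f x i = Polynomial.eval (∑ j, x j ^ 2) P * x i := rfl
    rw [hfxi, map_mul, hbridge]
    simp [MvPolynomial.eval_X, map_sum]
  · apply Set.Subset.antisymm
    · rintro z ⟨x, hx, rfl⟩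
      rw [mem_closedBall_zero_iff]
      apply hsub
      have hx2 : ‖x‖ ^ 2 ≤ (n : ℝ) := by
        rw [← hS]
        calc ∑ j, x j ^ 2 ≤ ∑ _j : Fin n, (1:ℝ) := by
              refine Finset.sum_le_sum (fun i _ => ?_)
              have h1 := (hx i).1
              have h2 := (hx i).2
              nlinarith
          _ = n := by simp
      have hn1 : (n:ℝ) < 2 ^ n := by exact_mod_cast (Nat.lt_two_pow_self : n < 2 ^ n)
      nlinarith [norm_nonneg x, A2]
    · intro y hy
      rw [mem_closedBall_zero_iff] at hy
      obtain ⟨x, hx1, hx2, hx3⟩ := hcover y hy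
      exact ⟨x, fun i => abs_le.mp (hx2 i), hx3⟩
  · refine ⟨1, one_pos, fun ε hε hε1 => ?_⟩
    apply Set.Subset.antisymm
    · rintro z ⟨x, hx, rfl⟩
      rw [mem_ball_zero_iff] at hx
      rw [mem_closedBall_zero_iff]
      apply hsub
      linarith
    · intro y hy
      rw [mem_closedBall_zero_iff] at hy
      obtain ⟨x, hx1, hx2, hx3⟩ := hcover y hy
      refine ⟨x, ?_, hx3⟩
      rw [mem_ball_zero_iff]
      linarith
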